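/- Let μ > 0 and let f∞(v) = (1/μ) e^{−v/μ}. Let r : [0,∞) → ℝ be continuously differentiable with ∫₀^∞ |r'(v)|² / f∞(v) dv < ∞, r' integrable on (v,∞) for each v with r(v) = − ∫_v^∞ r'(y) dy (in particular r(v) → 0 as v → ∞), and ∫₀^∞ |r(v)|² / f∞(v) dv < ∞. Then the Poincaré-type inequality ∫₀^∞ |r(v)|² / f∞(v) dv ≤ 4 μ² ∫₀^∞ |r'(v)|² / f∞(v) dv holds, i.e. ∫₀^∞ μ e^{v/μ} |r(v)|² dv ≤ 4 μ² ∫₀^∞ μ e^{v/μ} |r'(v)|² dv. -/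

import Mathlib

open MeasureTheory Set Filter Topology

set_option maxHeartbeats 1000000

/-- **Poincaré-type inequality with exponential weight (Lemma L2).**
Let `μ > 0` and `f∞(v) = (1/μ) e^{−v/μ}`. If `r : [0,∞) → ℝ` is continuously
differentiable with `∫₀^∞ |r'(v)|²/f∞(v) dv < ∞`, `r'` integrable on `(v,∞)` for each
`v ≥ 0` with `r(v) = −∫_v^∞ r'(y) dy` (in particular `r(v) → 0` as `v → ∞`), and
`∫₀^∞ |r(v)|²/f∞(v) dv < ∞`, then
`∫₀^∞ |r(v)|²/f∞(v) dv ≤ 4μ² ∫₀^∞ |r'(v)|²/f∞(v) dv`, i.e.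
`∫₀^∞ μ e^{v/μ} |r(v)|² dv ≤ 4μ² ∫₀^∞ μ e^{v/μ} |r'(v)|² dv`. -/
theorem poincare_type_inequality
    (μ : ℝ) (hμ : 0 < μ)
    (r r' : ℝ → ℝ)
    (hderiv : ∀ v : ℝ, 0 ≤ v → HasDerivAt r (r' v) v)
    (hcont : ContinuousOn r' (Ici 0))
    (hr'int : ∀ v : ℝ, 0 ≤ v → IntegrableOn r' (Ioi v))
    (hrepr : ∀ v : ℝ, 0 ≤ v → r v = -∫ y in Ioi v, r' y)
    (hweighted : IntegrableOn (fun v => μ * Real.exp (v / μ) * (r v) ^ 2) (Ioi 0))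
    (hweighted' : IntegrableOn (fun v => μ * Real.exp (v / μ) * (r' v) ^ 2) (Ioi 0)) :
    ∫ v in Ioi (0:ℝ), μ * Real.exp (v / μ) * (r v) ^ 2
      ≤ 4 * μ ^ 2 * ∫ v in Ioi (0:ℝ), μ * Real.exp (v / μ) * (r' v) ^ 2 := by
  have hμ0 : μ ≠ 0 := ne_of_gt hμ
  set e : ℝ → ℝ := fun v => Real.exp (v / μ) with he_def
  have he_pos : ∀ v, 0 < e v := fun v => Real.exp_pos _
  have he_cont : Continuous e := Real.continuous_exp.comp (continuous_id.div_const μ)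
  have hr_cont : ContinuousOn r (Ici 0) := fun v hv =>
    (hderiv v hv).continuousAt.continuousWithinAt
  -- integrability of e * r^2 and e * r'^2
  have hA : IntegrableOn (fun v => e v * (r v) ^ 2) (Ioi 0) := by
    have h := hweighted.const_mul μ⁻¹
    refine h.congr (Eventually.of_forall fun v => ?_)
    field_simp
    ring
  have hB : IntegrableOn (fun v => e v * (r' v) ^ 2) (Ioi 0) := by
    have h := hweighted'.const_mul μ⁻¹
    refine h.congr (Eventually.of_forall fun v => ?_)
    field_simp
    ring
  -- integrability of e * (r * r')
  have hC_meas : AEStronglyMeasurable (fun v => e v * (r v * r' v))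
      (volume.restrict (Ioi 0)) := by
    apply ContinuousOn.aestronglyMeasurable _ measurableSet_Ioi
    exact (he_cont.continuousOn.mul ((hr_cont.mono Ioi_subset_Ici_self).mul
      (hcont.mono Ioi_subset_Ici_self)))
  have hC : IntegrableOn (fun v => e v * (r v * r' v)) (Ioi 0) := by
    have hsum : IntegrableOn (fun v => e v * (r v) ^ 2 + e v * (r' v) ^ 2) (Ioi 0) :=
      hA.add hB
    refine hsum.mono' hC_meas ?_
    filter_upwards [] with v
    have hev := (he_pos v).le
    rw [Real.norm_eq_abs, abs_mul, abs_of_nonneg hev, abs_mul]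
    have h1 : |r v| * |r' v| ≤ (r v) ^ 2 + (r' v) ^ 2 := by
      nlinarith [sq_nonneg (|r v| - |r' v|), sq_abs (r v), sq_abs (r' v),
        abs_nonneg (r v), abs_nonneg (r' v)]
    have h2 : e v * (|r v| * |r' v|) ≤ e v * ((r v) ^ 2 + (r' v) ^ 2) :=
      mul_le_mul_of_nonneg_left h1 hev
    have h3 : e v * ((r v) ^ 2 + (r' v) ^ 2)
        = e v * (r v) ^ 2 + e v * (r' v) ^ 2 := by ring
    linarith
  -- the function g and its derivative
  set g : ℝ → ℝ := fun v => μ * e v * (r v) ^ 2 with hg_def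
  set g' : ℝ → ℝ := fun v => e v * (r v) ^ 2 + 2 * μ * (e v * (r v * r' v)) with hg'_def
  have hgderiv : ∀ v ∈ Ici (0:ℝ), HasDerivAt g (g' v) v := by
    intro v hv
    have h1 : HasDerivAt (fun v : ℝ => v / μ) (1 / μ) v := by
      simpa using (hasDerivAt_id v).div_const μ
    have hexp : HasDerivAt e (e v * (1 / μ)) v := h1.exp
    have hr2 : HasDerivAt (fun v => (r v) ^ 2) (2 * r v * r' v) v := by
      simpa using (hderiv v hv).fun_pow 2
    have h2 := (hexp.fun_mul hr2).const_mul μ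
    have hfun : (fun v => μ * (e v * r v ^ 2)) = g := by
      funext x; rw [hg_def]; ring
    rw [hfun] at h2
    refine h2.congr_deriv ?_
    rw [hg'_def]
    field_simp
  have hg'_cont : ContinuousOn g' (Ici 0) := by
    apply ContinuousOn.add
    · exact he_cont.continuousOn.mul (hr_cont.pow 2)
    · exact continuousOn_const.mul (he_cont.continuousOn.mul (hr_cont.mul hcont))
  have hg'int : IntegrableOn g' (Ioi 0) := hA.add (hC.const_mul (2 * μ))
  -- FTC on [0, v]
  have hftc : ∀ v : ℝ, 0 ≤ v → ∫ y in (0:ℝ)..v, g' y = g v - g 0 := by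
    intro v hv
    apply intervalIntegral.integral_eq_sub_of_hasDerivAt
    · intro y hy
      rw [uIcc_of_le hv] at hy
      exact hgderiv y hy.1
    · apply ContinuousOn.intervalIntegrable
      refine hg'_cont.mono ?_
      rw [uIcc_of_le hv]
      exact fun y hy => hy.1
  -- limit of g at infinity
  set I : ℝ := ∫ y in Ioi (0:ℝ), g' y with hI_def
  have htendI : Tendsto (fun v => ∫ y in (0:ℝ)..v, g' y) atTop (𝓝 I) :=
    intervalIntegral_tendsto_integral_Ioi 0 hg'int tendsto_id
  have htendg : Tendsto g atTop (𝓝 (g 0 + I)) := by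
    have : Tendsto (fun v => g 0 + ∫ y in (0:ℝ)..v, g' y) atTop (𝓝 (g 0 + I)) :=
      tendsto_const_nhds.add htendI
    refine this.congr' ?_
    filter_upwards [eventually_ge_atTop (0:ℝ)] with v hv
    rw [hftc v hv]; ring
  -- the limit is zero
  have hgnonneg : ∀ v, 0 ≤ g v := fun v =>
    mul_nonneg (mul_nonneg hμ.le (he_pos v).le) (sq_nonneg _)
  have hL0 : g 0 + I = 0 := by
    rcases lt_trichotomy (g 0 + I) 0 with h | h | h
    · exfalso
      have := ge_of_tendsto htendg (Eventually.of_forall hgnonneg)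
      linarith
    · exact h
    · exfalso
      -- g eventually ≥ (g 0 + I)/2 > 0, contradicting integrability on Ioi
      have hev : ∀ᶠ v in atTop, (g 0 + I) / 2 ≤ g v :=
        htendg.eventually (eventually_ge_nhds (by linarith))
      obtain ⟨M, hM⟩ := (hev.and (eventually_ge_atTop (0:ℝ))).exists_forall_of_atTop
      have hgint : IntegrableOn g (Ioi M) := by
        refine hweighted.mono_set (fun x hx => ?_)
        have := (hM M le_rfl).2
        exact mem_Ioi.mpr (lt_of_le_of_lt this hx)
      have hconst : Integrable (fun _ : ℝ => (g 0 + I) / 2) (volume.restrict (Ioi M)) := by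
        refine Integrable.mono' hgint aestronglyMeasurable_const ?_
        rw [ae_restrict_iff' measurableSet_Ioi]
        filter_upwards [] with x hx
        rw [Real.norm_eq_abs, abs_of_nonneg (by linarith)]
        exact (hM x (le_of_lt hx)).1
      rw [integrable_const_iff] at hconst
      rcases hconst with h' | h'
      · linarith
      · rw [isFiniteMeasure_restrict] at h'
        simp [Measure.restrict_apply, Real.volume_Ioi] at h'
  -- hence ∫ g' = - g 0
  have hI : I = -(μ * (r 0) ^ 2) := by
    have : g 0 = μ * (r 0) ^ 2 := by simp [hg_def, he_def]
    linarith [hL0, this.symm ▸ hL0]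
  -- split the integral
  set A : ℝ := ∫ v in Ioi (0:ℝ), e v * (r v) ^ 2 with hA_def
  set B : ℝ := ∫ v in Ioi (0:ℝ), e v * (r' v) ^ 2 with hB_def
  set C : ℝ := ∫ v in Ioi (0:ℝ), e v * (r v * r' v) with hC_def
  have hsplit : I = A + 2 * μ * C := by
    rw [hI_def, hg'_def]
    rw [integral_add hA (hC.const_mul (2 * μ)), integral_const_mul]
  have hkey : A + 2 * μ * C ≤ 0 := by
    rw [← hsplit, hI]
    nlinarith [sq_nonneg (r 0)]
  -- bound -2μC by A/2 + 2μ²B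
  have hbound : -(2 * μ * C) ≤ (1/2) * A + 2 * μ ^ 2 * B := by
    have h1 : -(2 * μ * C) = ∫ v in Ioi (0:ℝ), (-(2 * μ)) * (e v * (r v * r' v)) := by
      rw [integral_const_mul]; ring
    have h2 : ((1:ℝ)/2) * A + 2 * μ ^ 2 * B
        = ∫ v in Ioi (0:ℝ), ((1/2) * (e v * (r v) ^ 2) + 2 * μ ^ 2 * (e v * (r' v) ^ 2)) := by
      rw [integral_add (hA.const_mul _) (hB.const_mul _), integral_const_mul,
        integral_const_mul]
    rw [h1, h2]
    refine integral_mono_ae (hC.const_mul _) ((hA.const_mul _).add (hB.const_mul _)) ?_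
    filter_upwards [] with v
    have hev := (he_pos v).le
    nlinarith [mul_nonneg hev (sq_nonneg (r v + 2 * μ * r' v))]
  have hAB : A ≤ 4 * μ ^ 2 * B := by linarith
  -- conclude
  have hLHS : ∫ v in Ioi (0:ℝ), μ * Real.exp (v / μ) * (r v) ^ 2 = μ * A := by
    rw [hA_def, ← integral_const_mul]
    congr 1 with v; ring
  have hRHS : ∫ v in Ioi (0:ℝ), μ * Real.exp (v / μ) * (r' v) ^ 2 = μ * B := by
    rw [hB_def, ← integral_const_mul]
    congr 1 with v; ring
  rw [hLHS, hRHS]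
  nlinarith [hAB, hμ]
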